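/- arXiv:1603.03075 — 2 statements merged into one kernel-verified Lean document; each statement's English description precedes it below -/
import Mathlib

section
/- Let T be a set and R : T × T → ℂ Hermitian with |R(s,t)| ∈ {0,1}. If t ∈ T^n, π ∈ S_n^1(t) and ν ∈ S_n^1(t_π) (so that also πν ∈ S_n^1(t)), then the cocycle identity R_{π^{-1}}(t) · R_{ν^{-1}}(t_π) = R_{ν^{-1}π^{-1}}(t) holds. -/
/-- `R_π(t) = ∏_{i<j, π(i)>π(j)} R(t_i, t_j)`. -/
def Qprod {T : Type*} (n : ℕ) (R : T → T → ℂ) (π : Equiv.Perm (Fin n)) (t : Fin n → T) : ℂ :=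
  ∏ p ∈ Finset.univ.filter (fun p : Fin n × Fin n => p.1 < p.2 ∧ π p.2 < π p.1),
    R (t p.1) (t p.2)

lemma Qprod_eq_prod_if {T : Type*} (n : ℕ) (R : T → T → ℂ) (σ : Equiv.Perm (Fin n))
    (t : Fin n → T) :
    Qprod n R σ t = ∏ p ∈ Finset.univ.filter (fun p : Fin n × Fin n => p.1 < p.2),
      (if σ p.2 < σ p.1 then R (t p.1) (t p.2) else 1) := by
  rw [Qprod, ← Finset.prod_filter, Finset.filter_filter]

/-- For `R` Hermitian with `|R| ∈ {0,1}`: if `π ∈ S_n^1(t)` and `ν ∈ S_n^1(t_π)`,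
then the cocycle identity `R_{π⁻¹}(t) · R_{ν⁻¹}(t_π) = R_{ν⁻¹π⁻¹}(t)` holds. -/
theorem Rprod_cocycle {T : Type*} {n : ℕ} (R : T → T → ℂ)
    (hherm : ∀ s t : T, R s t = starRingEnd ℂ (R t s))
    (habs : ∀ s t : T, ‖R s t‖ = 0 ∨ ‖R s t‖ = 1)
    (π ν : Equiv.Perm (Fin n)) (t : Fin n → T)
    (hπ : ‖Qprod n R π⁻¹ t‖ = 1)
    (hν : ‖Qprod n R ν⁻¹ (t ∘ π)‖ = 1) :
    Qprod n R π⁻¹ t * Qprod n R ν⁻¹ (t ∘ π) = Qprod n R (π * ν)⁻¹ t := by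
  classical
  have habs1 : ∀ p : Fin n × Fin n, p.1 < p.2 → π⁻¹ p.2 < π⁻¹ p.1 →
      ‖R (t p.1) (t p.2)‖ = 1 := by
    intro p h1 h2
    rcases habs (t p.1) (t p.2) with h | h
    · exfalso
      have h0 : Qprod n R π⁻¹ t = 0 := by
        apply Finset.prod_eq_zero (i := p)
        · rw [Equiv.Perm.coe_inv] at h2
          simp [h1, h2]
        · simpa using h
      rw [h0] at hπ; simp at hπ
    · exact h
  set P := Finset.univ.filter (fun p : Fin n × Fin n => p.1 < p.2) with hP
  have memP : ∀ p : Fin n × Fin n, p ∈ P ↔ p.1 < p.2 := by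
    intro p; simp [hP]
  set sq : Fin n × Fin n → Fin n × Fin n :=
    fun q => if π⁻¹ q.1 < π⁻¹ q.2 then (π⁻¹ q.1, π⁻¹ q.2) else (π⁻¹ q.2, π⁻¹ q.1) with hsq
  set sp : Fin n × Fin n → Fin n × Fin n :=
    fun p => if π p.1 < π p.2 then (π p.1, π p.2) else (π p.2, π p.1) with hsp
  have hne : ∀ q : Fin n × Fin n, q.1 < q.2 → π⁻¹ q.1 ≠ π⁻¹ q.2 := by
    intro q h he
    exact absurd (Equiv.injective _ he) (ne_of_lt h)
  have hne' : ∀ p : Fin n × Fin n, p.1 < p.2 → π p.1 ≠ π p.2 := by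
    intro p h he
    exact absurd (Equiv.injective _ he) (ne_of_lt h)
  have hreindex : ∏ q ∈ P, (if ν⁻¹ (sq q).2 < ν⁻¹ (sq q).1
        then R (t (π (sq q).1)) (t (π (sq q).2)) else 1)
      = ∏ p ∈ P, (if ν⁻¹ p.2 < ν⁻¹ p.1 then R (t (π p.1)) (t (π p.2)) else 1) := by
    apply Finset.prod_nbij' sq sp
    · intro q hq
      rw [memP] at hq ⊢
      rcases lt_or_gt_of_ne (hne q hq) with h | h
      · rw [Equiv.Perm.coe_inv] at h
        simp [hsq, h]
      · rw [Equiv.Perm.coe_inv] at h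
        simp [hsq, not_lt_of_gt h, h]
    · intro p hp
      rw [memP] at hp ⊢
      rcases lt_or_gt_of_ne (hne' p hp) with h | h
      · simp [hsp, h]
      · simp [hsp, not_lt_of_gt h, h]
    · intro q hq
      rw [memP] at hq
      rcases lt_or_gt_of_ne (hne q hq) with h | h
      · rw [Equiv.Perm.coe_inv] at h
        simp [hsq, hsp, h, hq]
      · simp only [hsq, hsp, not_lt_of_gt h, if_false]
        simp [Equiv.apply_symm_apply, not_lt_of_gt hq]
    · intro p hp
      rw [memP] at hp
      rcases lt_or_gt_of_ne (hne' p hp) with h | h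
      · simp [hsq, hsp, h, hp]
      · simp only [hsq, hsp, not_lt_of_gt h, if_false]
        simp [Equiv.symm_apply_apply, not_lt_of_gt hp]
    · intro q hq; rfl
  rw [Qprod_eq_prod_if, Qprod_eq_prod_if, Qprod_eq_prod_if]
  simp only [Function.comp_apply]
  rw [← hP, ← hreindex, ← Finset.prod_mul_distrib]
  apply Finset.prod_congr rfl
  intro q hq
  rw [memP] at hq
  have hmul : ∀ x : Fin n, (π * ν)⁻¹ x = ν⁻¹ (π⁻¹ x) := by
    intro x; simp [mul_inv_rev, Equiv.Perm.mul_apply]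
  rcases lt_or_gt_of_ne (hne q hq) with h | h
  · -- π⁻¹ q.1 < π⁻¹ q.2 : no inversion from π
    have h2 : ¬ π⁻¹ q.2 < π⁻¹ q.1 := lt_asymm h
    rw [Equiv.Perm.coe_inv] at h h2
    simp [hsq, h, h2, hmul]
  · -- π⁻¹ q.2 < π⁻¹ q.1
    have h2 : ¬ π⁻¹ q.1 < π⁻¹ q.2 := lt_asymm h
    simp only [hsq, h2, if_false]
    rw [if_pos h, hmul, hmul]
    by_cases hc : ν⁻¹ (π⁻¹ q.2) < ν⁻¹ (π⁻¹ q.1)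
    · rw [if_pos hc, if_neg (lt_asymm hc), mul_one]
    · have hc' : ν⁻¹ (π⁻¹ q.1) < ν⁻¹ (π⁻¹ q.2) := by
        rcases lt_or_gt_of_ne (fun he : ν⁻¹ (π⁻¹ q.1) = ν⁻¹ (π⁻¹ q.2) =>
          hne q hq (Equiv.injective ν⁻¹ he)) with h' | h'
        · exact h'
        · exact absurd h' hc
      rw [if_pos hc', if_neg hc]
      simp only [Equiv.Perm.coe_inv, Equiv.apply_symm_apply]
      rw [hherm (t q.2) (t q.1), Complex.mul_conj, Complex.normSq_eq_norm_sq,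
        habs1 q hq h]
      norm_num
end

section
/- Let T be a set, R : T × T → ℂ Hermitian with |R| ∈ {0,1}, and fix t = (t_1,…,t_{n+1}) ∈ T^{n+1} and i ∈ {1,…,n+1}. Let S^1_{n+1,i}(t) := {π ∈ S_{n+1} : |R_{π^{-1}}(t)| = 1, π(n+1) = i}. Then for any π ∈ S^1_{n+1,i}(t), the cardinality of S^1_{n+1,i}(t) equals c_n(t_{π(1)},…,t_{π(n)}), where c_n(s) is the number of ν ∈ S_n with |R_{ν^{-1}}(s)| = 1. Consequently ∑_{π ∈ S^1_{n+1,i}(t)} 1/c_n(t_{π(1)},…,t_{π(n)}) = 1 whenever S^1_{n+1,i}(t) is nonempty. -/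
/-- `c_n(t) := |{ν ∈ S_n : |R_{ν⁻¹}(t)| = 1}|`. -/
noncomputable def cN {T : Type*} (n : ℕ) (R : T → T → ℂ) (t : Fin n → T) : ℕ :=
  Nat.card {ν : Equiv.Perm (Fin n) // ‖Qprod n R ν⁻¹ t‖ = 1}

open Equiv Fin

lemma perm_inv_apply_self {α : Type*} (f : Perm α) (x : α) : f⁻¹ (f x) = x := f.symm_apply_apply x

lemma perm_apply_inv_self {α : Type*} (f : Perm α) (x : α) : f (f⁻¹ x) = x := f.apply_symm_apply x

/-- extend a permutation of `Fin n` to `Fin (n+1)` fixing `last`. -/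
def extLast {n : ℕ} (ν : Perm (Fin n)) : Perm (Fin (n + 1)) :=
  finSuccEquivLast.symm.permCongr ν.optionCongr

@[simp] lemma extLast_castSucc {n : ℕ} (ν : Perm (Fin n)) (j : Fin n) :
    extLast ν j.castSucc = (ν j).castSucc := by
  simp [extLast, Equiv.permCongr_apply]

@[simp] lemma extLast_last {n : ℕ} (ν : Perm (Fin n)) :
    extLast ν (last n) = last n := by
  simp [extLast, Equiv.permCongr_apply]

@[simp] lemma extLast_inv_castSucc {n : ℕ} (ν : Perm (Fin n)) (j : Fin n) :
    (extLast ν)⁻¹ j.castSucc = (ν⁻¹ j).castSucc := by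
  have h : extLast ν ((ν⁻¹ j).castSucc) = j.castSucc := by
    rw [extLast_castSucc, perm_apply_inv_self]
  rw [← h, perm_inv_apply_self]

@[simp] lemma extLast_inv_last {n : ℕ} (ν : Perm (Fin n)) :
    (extLast ν)⁻¹ (last n) = last n := by
  have h2 := perm_inv_apply_self (extLast ν) (last n)
  rw [extLast_last] at h2
  exact h2

lemma extLast_injective {n : ℕ} : Function.Injective (extLast (n := n)) := by
  intro ν μ h
  ext j
  have := congrArg (fun σ : Perm (Fin (n+1)) => σ j.castSucc) h
  have h2 : (ν j).castSucc = (μ j).castSucc := by simpa using this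
  exact congrArg Fin.val (Fin.castSucc_injective _ h2)

lemma abs_Qprod_eq_one_iff {T : Type*} {m : ℕ} (R : T → T → ℂ)
    (habs : ∀ s t : T, ‖R s t‖ = 0 ∨ ‖R s t‖ = 1)
    (ρ : Perm (Fin m)) (u : Fin m → T) :
    ‖Qprod m R ρ u‖ = 1 ↔
      ∀ a b : Fin m, a < b → ρ b < ρ a → ‖R (u a) (u b)‖ = 1 := by
  rw [Qprod, norm_prod]
  constructor
  · intro h a b hab hba
    by_contra hne
    have h0 : ‖R (u a) (u b)‖ = 0 := (habs _ _).resolve_right hne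
    have : (∏ p ∈ Finset.univ.filter
        (fun p : Fin m × Fin m => p.1 < p.2 ∧ ρ p.2 < ρ p.1),
        ‖R (u p.1) (u p.2)‖) = 0 := by
      apply Finset.prod_eq_zero (i := (a, b))
      · simp [hab, hba]
      · exact h0
    rw [this] at h; norm_num at h
  · intro h
    apply Finset.prod_eq_one
    intro p hp
    simp only [Finset.mem_filter] at hp
    exact h p.1 p.2 hp.2.1 hp.2.2

section key
variable {T : Type*} {n : ℕ} (R : T → T → ℂ)

lemma key_iff (hsym : ∀ a b : T, ‖R a b‖ = ‖R b a‖)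
    (t : Fin (n + 1) → T) (π : Perm (Fin (n + 1)))
    (hπ : ∀ a b : Fin (n + 1), a < b → π⁻¹ b < π⁻¹ a →
      ‖R (t a) (t b)‖ = 1) (ν : Perm (Fin n)) :
    (∀ a b : Fin (n + 1), a < b → (π * extLast ν)⁻¹ b < (π * extLast ν)⁻¹ a →
        ‖R (t a) (t b)‖ = 1) ↔
    (∀ a b : Fin n, a < b → ν⁻¹ b < ν⁻¹ a →
        ‖R (t (π a.castSucc)) (t (π b.castSucc))‖ = 1) := by
  have hσinv : ∀ x : Fin (n + 1), (π * extLast ν)⁻¹ x = (extLast ν)⁻¹ (π⁻¹ x) := by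
    intro x; rw [mul_inv_rev]; rfl
  constructor
  · intro hσ a b hab hba
    set c := π a.castSucc with hc
    set d := π b.castSucc with hd
    have h1 : (π * extLast ν)⁻¹ c = (ν⁻¹ a).castSucc := by
      rw [hσinv, hc, perm_inv_apply_self, extLast_inv_castSucc]
    have h2 : (π * extLast ν)⁻¹ d = (ν⁻¹ b).castSucc := by
      rw [hσinv, hd, perm_inv_apply_self, extLast_inv_castSucc]
    have hdc : (π * extLast ν)⁻¹ d < (π * extLast ν)⁻¹ c := by
      rw [h1, h2]; exact Fin.castSucc_lt_castSucc_iff.2 hba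
    rcases lt_trichotomy c d with h | h | h
    · exact hσ c d h hdc
    · exfalso
      have : a = b := by
        have := π.injective h
        exact Fin.castSucc_injective _ this
      exact absurd this (ne_of_lt hab)
    · have : π⁻¹ c < π⁻¹ d := by
        rw [hc, hd, perm_inv_apply_self, perm_inv_apply_self]
        exact Fin.castSucc_lt_castSucc_iff.2 hab
      have h1' := hπ d c h this
      rw [hsym]; exact h1'
  · intro hν c d hcd hdc
    rcases lt_trichotomy (π⁻¹ c) (π⁻¹ d) with h | h | h
    · -- A < B
      have hBne : π⁻¹ d ≠ last n := by
        intro hB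
        rw [hσinv, hB, extLast_inv_last] at hdc
        exact absurd hdc (not_lt.2 (Fin.le_last _))
      obtain ⟨b, hb⟩ := Fin.exists_castSucc_eq.2 hBne
      have hAne : π⁻¹ c ≠ last n := by
        intro hA
        rw [hA, ← hb] at h
        exact absurd h (not_lt.2 (Fin.le_last _))
      obtain ⟨a, ha⟩ := Fin.exists_castSucc_eq.2 hAne
      have hab : a < b := by
        rw [← ha, ← hb] at h
        exact Fin.castSucc_lt_castSucc_iff.1 h
      have hba : ν⁻¹ b < ν⁻¹ a := by
        rw [hσinv, hσinv, ← ha, ← hb, extLast_inv_castSucc, extLast_inv_castSucc] at hdc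
        exact Fin.castSucc_lt_castSucc_iff.1 hdc
      have := hν a b hab hba
      rw [ha, hb, perm_apply_inv_self, perm_apply_inv_self] at this
      exact this
    · exfalso
      have : c = d := π⁻¹.injective h
      exact absurd this (ne_of_lt hcd)
    · exact hπ c d hcd h

end key

/-- For fixed `t ∈ T^{n+1}` and `i`, with
`S¹_{n+1,i}(t) = {π ∈ S_{n+1} : |R_{π⁻¹}(t)| = 1, π(n+1) = i}`:
for any `π ∈ S¹_{n+1,i}(t)` its cardinality equals `c_n(t_{π(1)},…,t_{π(n)})`,
and consequently `∑_{π ∈ S¹_{n+1,i}(t)} 1/c_n(t_{π(1)},…,t_{π(n)}) = 1`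
whenever the set is nonempty. -/
theorem card_S1_last_fixed_and_sum {T : Type*} {n : ℕ} (R : T → T → ℂ)
    (hherm : ∀ s t : T, R s t = starRingEnd ℂ (R t s))
    (habs : ∀ s t : T, ‖R s t‖ = 0 ∨ ‖R s t‖ = 1)
    (t : Fin (n + 1) → T) (i : Fin (n + 1)) :
    (∀ π ∈ {π : Equiv.Perm (Fin (n + 1)) |
        ‖Qprod (n + 1) R π⁻¹ t‖ = 1 ∧ π (Fin.last n) = i},
      Nat.card {π : Equiv.Perm (Fin (n + 1)) |
          ‖Qprod (n + 1) R π⁻¹ t‖ = 1 ∧ π (Fin.last n) = i} =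
        cN n R (fun j : Fin n => t (π j.castSucc))) ∧
    (({π : Equiv.Perm (Fin (n + 1)) |
        ‖Qprod (n + 1) R π⁻¹ t‖ = 1 ∧ π (Fin.last n) = i}).Nonempty →
      ∑ᶠ π ∈ {π : Equiv.Perm (Fin (n + 1)) |
          ‖Qprod (n + 1) R π⁻¹ t‖ = 1 ∧ π (Fin.last n) = i},
        ((cN n R (fun j : Fin n => t (π j.castSucc)) : ℝ))⁻¹ = 1) := by
  have hsym : ∀ a b : T, ‖R a b‖ = ‖R b a‖ := by
    intro a b; rw [hherm a b, Complex.norm_conj]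
  set S : Set (Perm (Fin (n + 1))) :=
    {π : Equiv.Perm (Fin (n + 1)) |
      ‖Qprod (n + 1) R π⁻¹ t‖ = 1 ∧ π (Fin.last n) = i} with hS
  have part1 : ∀ π ∈ S, Nat.card S = cN n R (fun j : Fin n => t (π j.castSucc)) := by
    intro π hπ
    obtain ⟨hπ1, hπ2⟩ := hπ
    have hπG : ∀ a b : Fin (n + 1), a < b → π⁻¹ b < π⁻¹ a →
        ‖R (t a) (t b)‖ = 1 :=
      (abs_Qprod_eq_one_iff R habs π⁻¹ t).1 hπ1
    set s : Fin n → T := fun j => t (π j.castSucc) with hs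
    have hFmem : ∀ ν : {ν : Perm (Fin n) // ‖Qprod n R ν⁻¹ s‖ = 1},
        (π * extLast ν.1) ∈ S := by
      intro ν
      constructor
      · exact (abs_Qprod_eq_one_iff R habs (π * extLast ν.1)⁻¹ t).2
          ((key_iff R hsym t π hπG ν.1).2
            ((abs_Qprod_eq_one_iff R habs ν.1⁻¹ s).1 ν.2))
      · show π (extLast ν.1 (last n)) = i
        rw [extLast_last]; exact hπ2
    let F : {ν : Perm (Fin n) // ‖Qprod n R ν⁻¹ s‖ = 1} → S :=
      fun ν => ⟨π * extLast ν.1, hFmem ν⟩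
    have hFbij : Function.Bijective F := by
      constructor
      · intro a b hab
        have : π * extLast a.1 = π * extLast b.1 := congrArg Subtype.val hab
        exact Subtype.ext (extLast_injective (mul_left_cancel this))
      · rintro ⟨σ, hσ1, hσ2⟩
        set τ : Perm (Fin (n + 1)) := π⁻¹ * σ with hτ
        have hτlast : τ (last n) = last n := by
          show π⁻¹ (σ (last n)) = last n
          rw [hσ2, ← hπ2, perm_inv_apply_self]
        have hτlast' : τ⁻¹ (last n) = last n := by
          have := perm_inv_apply_self τ (last n)
          rw [hτlast] at this; exact this
        have hne : ∀ j : Fin n, τ j.castSucc ≠ last n := by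
          intro j h
          have := τ.injective (h.trans hτlast.symm)
          exact absurd this (ne_of_lt (Fin.castSucc_lt_last j))
        have hne' : ∀ j : Fin n, τ⁻¹ j.castSucc ≠ last n := by
          intro j h
          have := τ⁻¹.injective (h.trans hτlast'.symm)
          exact absurd this (ne_of_lt (Fin.castSucc_lt_last j))
        let ν : Perm (Fin n) :=
          { toFun := fun j => (τ j.castSucc).castPred (hne j)
            invFun := fun j => (τ⁻¹ j.castSucc).castPred (hne' j)
            left_inv := by
              intro j
              apply Fin.castSucc_injective
              rw [Fin.castSucc_castPred, Fin.castSucc_castPred,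
                perm_inv_apply_self]
            right_inv := by
              intro j
              apply Fin.castSucc_injective
              rw [Fin.castSucc_castPred, Fin.castSucc_castPred,
                perm_apply_inv_self] }
        have hext : extLast ν = τ := by
          apply Equiv.ext
          intro x
          induction x using Fin.lastCases with
          | last => rw [extLast_last, hτlast]
          | cast j =>
            rw [extLast_castSucc]
            show ((τ j.castSucc).castPred (hne j)).castSucc = τ j.castSucc
            rw [Fin.castSucc_castPred]
        have hσeq : σ = π * extLast ν := by
          rw [hext, hτ, ← mul_assoc, mul_inv_cancel, one_mul]
        have hνmem : ‖Qprod n R ν⁻¹ s‖ = 1 := by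
          apply (abs_Qprod_eq_one_iff R habs ν⁻¹ s).2
          apply (key_iff R hsym t π hπG ν).1
          intro a b hab hba
          rw [← hσeq] at hba
          exact (abs_Qprod_eq_one_iff R habs σ⁻¹ t).1 hσ1 a b hab hba
        exact ⟨⟨ν, hνmem⟩, Subtype.ext hσeq.symm⟩
    exact (Nat.card_eq_of_bijective F hFbij).symm
  refine ⟨part1, ?_⟩
  intro hne
  have hfin : S.Finite := Set.toFinite S
  have hcongr : ∀ π ∈ S,
      ((cN n R (fun j : Fin n => t (π j.castSucc)) : ℝ))⁻¹ = ((Nat.card S : ℕ) : ℝ)⁻¹ := by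
    intro π hπ
    rw [← part1 π hπ]
  rw [finsum_mem_congr rfl hcongr, finsum_mem_eq_finite_toFinset_sum _ hfin,
    Finset.sum_const, nsmul_eq_mul]
  have hcards : hfin.toFinset.card = Nat.card S := by
    rw [Nat.card_coe_set_eq, Set.ncard_eq_toFinset_card _ hfin]
  rw [hcards]
  have : Nonempty S := hne.to_subtype
  have : Finite S := hfin.to_subtype
  have hpos : (0 : ℕ) < Nat.card S := Nat.card_pos
  exact mul_inv_cancel₀ (by exact_mod_cast hpos.ne')
end
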